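/- Let 0 ≤ q < 1 and X be geometric with P(X=k) = (1-q)q^{k-1}, k ≥ 1. If 0 < c ≤ (1-q)/(1+q), then β = 0 is the only solution in [0,1] of the equation β = 1 - E[X e^{-cXβ}]/E[X]. -/

import Mathlib

open MeasureTheory

section Aux

variable {Ω : Type*} [MeasurableSpace Ω] (μ : Measure Ω) [IsProbabilityMeasure μ]
  (q : ℝ)

lemma geom_hasSum_one (hq0 : 0 ≤ q) (hq1 : q < 1) :
    HasSum (fun n : ℕ => (1 - q) * q ^ n) 1 := by
  have h := (hasSum_geometric_of_lt_one hq0 hq1).mul_left (1 - q)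
  have h1 : (1 - q) * (1 - q)⁻¹ = 1 := mul_inv_cancel₀ (by linarith)
  rwa [h1] at h

lemma geom_map_succ (X : Ω → ℕ) (hXm : Measurable X)
    (hX : ∀ k : ℕ, 1 ≤ k → μ {ω | X ω = k} = ENNReal.ofReal ((1 - q) * q ^ (k - 1))) :
    ∀ n : ℕ, (μ.map X) {n + 1} = ENNReal.ofReal ((1 - q) * q ^ n) := by
  intro n
  rw [Measure.map_apply hXm (measurableSet_singleton _)]
  have : X ⁻¹' {n + 1} = {ω | X ω = n + 1} := rfl
  rw [this, hX (n + 1) (by omega)]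
  simp

lemma geom_map_zero (hq0 : 0 ≤ q) (hq1 : q < 1) (X : Ω → ℕ) (hXm : Measurable X)
    (hX : ∀ k : ℕ, 1 ≤ k → μ {ω | X ω = k} = ENNReal.ofReal ((1 - q) * q ^ (k - 1))) :
    (μ.map X) {0} = 0 := by
  set ν := μ.map X with hν
  haveI : IsProbabilityMeasure ν := Measure.isProbabilityMeasure_map hXm.aemeasurable
  have hνk := geom_map_succ μ q X hXm hX
  have hsum1 := geom_hasSum_one q hq0 hq1
  have hcompl : ν ({0}ᶜ) = 1 := by
    have hset : ({0}ᶜ : Set ℕ) = ⋃ n : ℕ, {n + 1} := by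
      ext k; simp
    rw [hset, measure_iUnion ?_ (fun n => measurableSet_singleton _)]
    · calc ∑' n : ℕ, ν {n + 1} = ∑' n : ℕ, ENNReal.ofReal ((1 - q) * q ^ n) := by
            simp only [hν, hνk]
        _ = ENNReal.ofReal (∑' n : ℕ, (1 - q) * q ^ n) :=
            (ENNReal.ofReal_tsum_of_nonneg
              (fun n => mul_nonneg (by linarith) (pow_nonneg hq0 n)) hsum1.summable).symm
        _ = 1 := by rw [hsum1.tsum_eq]; simp
    · intro i j hij
      simp only [Function.onFun, Set.disjoint_singleton]
      omega
  have htot : ν {0} + ν ({0}ᶜ) = 1 := by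
    rw [measure_add_measure_compl (measurableSet_singleton 0)]
    exact measure_univ
  rw [hcompl] at htot
  have : ν {0} + 1 = 0 + 1 := by simpa using htot
  exact (ENNReal.add_left_inj ENNReal.one_ne_top).mp this

set_option maxHeartbeats 1000000 in
/-- Core lemma: integrals of functions of a geometric random variable as sums. -/
lemma geom_integral (hq0 : 0 ≤ q) (hq1 : q < 1) (X : Ω → ℕ) (hXm : Measurable X)
    (hX : ∀ k : ℕ, 1 ≤ k → μ {ω | X ω = k} = ENNReal.ofReal ((1 - q) * q ^ (k - 1)))
    (g : ℕ → ℝ) (hgs : Summable (fun n : ℕ => ‖g (n + 1)‖ * q ^ n)) :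
    Integrable (fun ω => g (X ω)) μ ∧
      ∫ ω, g (X ω) ∂μ = ∑' n : ℕ, (1 - q) * q ^ n * g (n + 1) := by
  set ν := μ.map X with hν
  have hνk := geom_map_succ μ q X hXm hX
  have hν0 := geom_map_zero μ q hq0 hq1 X hXm hX
  have hgm : AEStronglyMeasurable g ν := measurable_from_nat.aestronglyMeasurable
  have h1q : (0:ℝ) ≤ 1 - q := by linarith
  -- summability of the real series
  have hgs' : Summable (fun n : ℕ => (1 - q) * q ^ n * g (n + 1)) := by
    apply Summable.of_norm
    apply (hgs.mul_left (1 - q)).congr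
    intro n
    rw [norm_mul, norm_mul, Real.norm_of_nonneg h1q,
      Real.norm_of_nonneg (pow_nonneg hq0 n)]
    ring
  -- integrability over ν
  have hgi : Integrable g ν := by
    refine ⟨hgm, ?_⟩
    rw [HasFiniteIntegral, lintegral_countable']
    have h0 : ∑' a : ℕ, (‖g a‖ₑ : ENNReal) * ν {a}
        = ∑' n : ℕ, (‖g (n + 1)‖ₑ : ENNReal) * ν {n + 1} := by
      rw [tsum_eq_zero_add' ENNReal.summable, hν0]
      simp
    rw [h0]
    have h1 : ∀ n : ℕ, (‖g (n + 1)‖ₑ : ENNReal) * ν {n + 1}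
        = ENNReal.ofReal (‖g (n + 1)‖ * ((1 - q) * q ^ n)) := by
      intro n
      rw [hνk n, ENNReal.ofReal_mul (norm_nonneg _), ofReal_norm_eq_enorm]
    simp only [h1]
    rw [← ENNReal.ofReal_tsum_of_nonneg
      (fun n => mul_nonneg (norm_nonneg _) (mul_nonneg h1q (pow_nonneg hq0 n)))]
    · exact ENNReal.ofReal_lt_top
    · apply (hgs.mul_left (1 - q)).congr
      intro n; ring
  have hcomp : Integrable (fun ω => g (X ω)) μ :=
    (integrable_map_measure hgm hXm.aemeasurable).mp hgi
  refine ⟨hcomp, ?_⟩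
  have hc : Summable (fun a : ℕ => (ν {a}).toReal • g a) := by
    apply (summable_nat_add_iff 1).mp
    apply hgs'.congr
    intro n
    rw [hνk n, ENNReal.toReal_ofReal (mul_nonneg h1q (pow_nonneg hq0 n)), smul_eq_mul]
  calc ∫ ω, g (X ω) ∂μ = ∫ a, g a ∂ν := (integral_map hXm.aemeasurable hgm).symm
    _ = ∑' a : ℕ, (ν {a}).toReal • g a := integral_countable' hgi
    _ = (ν {0}).toReal • g 0 + ∑' n : ℕ, (ν {n + 1}).toReal • g (n + 1) :=
        Summable.tsum_eq_zero_add hc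
    _ = ∑' n : ℕ, (1 - q) * q ^ n * g (n + 1) := by
        rw [hν0]
        simp only [ENNReal.toReal_zero, zero_smul, zero_add]
        congr 1
        funext n
        rw [hνk n, ENNReal.toReal_ofReal (mul_nonneg h1q (pow_nonneg hq0 n)), smul_eq_mul]

lemma geom_hasSum_linear (hq0 : 0 ≤ q) (hq1 : q < 1) :
    HasSum (fun n : ℕ => ((n : ℝ) + 1) * q ^ n) (1 / (1 - q) ^ 2) := by
  have hq : ‖q‖ < 1 := by rw [Real.norm_eq_abs, abs_of_nonneg hq0]; exact hq1
  have h := hasSum_choose_mul_geometric_of_norm_lt_one 1 hq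
  have hfun : (fun n : ℕ => (((n + 1).choose 1 : ℕ) : ℝ) * q ^ n)
      = fun n : ℕ => ((n : ℝ) + 1) * q ^ n := by
    funext n
    rw [Nat.choose_one_right]
    push_cast; ring
  rw [hfun] at h
  simpa using h

lemma geom_hasSum_sq (hq0 : 0 ≤ q) (hq1 : q < 1) :
    HasSum (fun n : ℕ => ((n : ℝ) + 1) ^ 2 * q ^ n) ((1 + q) / (1 - q) ^ 3) := by
  have hq : ‖q‖ < 1 := by rw [Real.norm_eq_abs, abs_of_nonneg hq0]; exact hq1
  have hA := (hasSum_choose_mul_geometric_of_norm_lt_one 2 hq).mul_left 2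
  have hB := geom_hasSum_linear q hq0 hq1
  have h := hA.sub hB
  have h1q : (1 : ℝ) - q ≠ 0 := by intro h'; linarith
  have hfun : (fun n : ℕ => 2 * ((((n + 2).choose 2 : ℕ) : ℝ) * q ^ n)
        - ((n : ℝ) + 1) * q ^ n)
      = fun n : ℕ => ((n : ℝ) + 1) ^ 2 * q ^ n := by
    funext n
    have hch : 2 * ((n + 2).choose 2) = (n + 2) * (n + 1) := by
      rw [Nat.choose_two_right]
      have h3 : n + 2 - 1 = n + 1 := by omega
      rw [h3]
      have h2 : 2 ∣ (n + 2) * (n + 1) := by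
        have h := (Nat.even_mul_succ_self (n + 1)).two_dvd
        rw [Nat.mul_comm] at h
        exact h
      exact Nat.mul_div_cancel' h2
    have hcast : 2 * (((n + 2).choose 2 : ℕ) : ℝ) = ((n : ℝ) + 2) * ((n : ℝ) + 1) := by
      have := congrArg (Nat.cast : ℕ → ℝ) hch
      push_cast at this
      linarith
    rw [← mul_assoc, hcast]
    ring
  have hval : 2 * (1 / (1 - q) ^ (2 + 1)) - 1 / (1 - q) ^ 2 = (1 + q) / (1 - q) ^ 3 := by
    field_simp
    ring
  rw [hfun, hval] at h
  exact h

end Aux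

/-- In the (sub)critical case 0 < c ≤ (1-q)/(1+q), β = 0 is the only solution in [0,1]
of β = 1 - E[X e^{-cXβ}]/E[X]. -/
theorem stmt_7 {Ω : Type*} [MeasurableSpace Ω] (μ : Measure Ω) [IsProbabilityMeasure μ]
    (q c : ℝ) (hq0 : 0 ≤ q) (hq1 : q < 1) (hc0 : 0 < c) (hc : c ≤ (1 - q) / (1 + q))
    (X : Ω → ℕ) (hXm : Measurable X)
    (hX : ∀ k : ℕ, 1 ≤ k → μ {ω | X ω = k} = ENNReal.ofReal ((1 - q) * q ^ (k - 1))) :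
    ∀ β : ℝ, 0 ≤ β → β ≤ 1 →
      β = 1 - (∫ ω, (X ω : ℝ) * Real.exp (-(c * (X ω : ℝ) * β)) ∂μ) / (∫ ω, (X ω : ℝ) ∂μ) →
      β = 0 := by
  intro β hβ0 hβ1 heq
  by_contra hβne
  have hβpos : 0 < β := lt_of_le_of_ne hβ0 (Ne.symm hβne)
  have h1q : (0:ℝ) < 1 - q := by linarith
  have h1q' : (1:ℝ) - q ≠ 0 := ne_of_gt h1q
  have h1pq : (0:ℝ) < 1 + q := by linarith
  set g1 : ℕ → ℝ := fun k => (k : ℝ) with hg1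
  set g2 : ℕ → ℝ := fun k => (k : ℝ) ^ 2 with hg2
  set g3 : ℕ → ℝ := fun k => (k : ℝ) * Real.exp (-(c * (k : ℝ) * β)) with hg3
  have hS1 := geom_hasSum_linear q hq0 hq1
  have hS2 := geom_hasSum_sq q hq0 hq1
  -- summability hypotheses
  have hgs1 : Summable (fun n : ℕ => ‖g1 (n + 1)‖ * q ^ n) := by
    apply hS1.summable.congr
    intro n
    rw [hg1]
    rw [Real.norm_of_nonneg (by positivity)]
    push_cast; ring
  have hgs2 : Summable (fun n : ℕ => ‖g2 (n + 1)‖ * q ^ n) := by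
    apply hS2.summable.congr
    intro n
    rw [hg2]
    rw [Real.norm_of_nonneg (by positivity)]
    push_cast; ring
  have hgs3 : Summable (fun n : ℕ => ‖g3 (n + 1)‖ * q ^ n) := by
    apply Summable.of_nonneg_of_le (fun n => by positivity) _ hgs1
    intro n
    apply mul_le_mul_of_nonneg_right _ (by positivity)
    rw [hg3, hg1]
    rw [Real.norm_of_nonneg (by positivity), Real.norm_of_nonneg (by positivity)]
    have hexp : Real.exp (-(c * ((n + 1 : ℕ) : ℝ) * β)) ≤ 1 := by
      apply Real.exp_le_one_iff.mpr
      have : (0:ℝ) ≤ c * ((n + 1 : ℕ) : ℝ) * β := by positivity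
      linarith
    calc ((n + 1 : ℕ) : ℝ) * Real.exp (-(c * ((n + 1 : ℕ) : ℝ) * β))
        ≤ ((n + 1 : ℕ) : ℝ) * 1 := by
          apply mul_le_mul_of_nonneg_left hexp (by positivity)
      _ = ((n + 1 : ℕ) : ℝ) := mul_one _
  obtain ⟨hInt1, hI1⟩ := geom_integral μ q hq0 hq1 X hXm hX g1 hgs1
  obtain ⟨hInt2, hI2⟩ := geom_integral μ q hq0 hq1 X hXm hX g2 hgs2
  obtain ⟨hInt3, hI3⟩ := geom_integral μ q hq0 hq1 X hXm hX g3 hgs3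
  -- values of the integrals
  have hE1 : ∫ ω, g1 (X ω) ∂μ = 1 / (1 - q) := by
    rw [hI1]
    have hfun : (fun n : ℕ => (1 - q) * (((n : ℝ) + 1) * q ^ n))
        = fun n : ℕ => (1 - q) * q ^ n * g1 (n + 1) := by
      funext n; rw [hg1]; push_cast; ring
    have h := hS1.mul_left (1 - q)
    rw [hfun] at h
    rw [h.tsum_eq]
    field_simp
  have hE2 : ∫ ω, g2 (X ω) ∂μ = (1 + q) / (1 - q) ^ 2 := by
    rw [hI2]
    have hfun : (fun n : ℕ => (1 - q) * (((n : ℝ) + 1) ^ 2 * q ^ n))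
        = fun n : ℕ => (1 - q) * q ^ n * g2 (n + 1) := by
      funext n; rw [hg2]; push_cast; ring
    have h := hS2.mul_left (1 - q)
    rw [hfun] at h
    rw [h.tsum_eq]
    field_simp
  -- the difference function and its positivity
  set D : Ω → ℝ := fun ω => g3 (X ω) - g1 (X ω) + (c * β) * g2 (X ω) with hD
  have hsub : Integrable (fun ω => g3 (X ω) - g1 (X ω)) μ := hInt3.sub hInt1
  have hmul : Integrable (fun ω => (c * β) * g2 (X ω)) μ := hInt2.const_mul _
  have hDInt : Integrable D μ := hsub.add hmul
  have hDnonneg : ∀ ω, 0 ≤ D ω := by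
    intro ω
    rw [hD, hg1, hg2, hg3]
    simp only
    rcases Nat.eq_zero_or_pos (X ω) with h0 | hpos
    · simp [h0]
    · have hk1 : (1:ℝ) ≤ (X ω : ℝ) := by exact_mod_cast hpos
      have hne : -(c * (X ω : ℝ) * β) ≠ 0 := by
        have : (0:ℝ) < c * (X ω : ℝ) * β := by positivity
        linarith
      have hexp := Real.add_one_lt_exp hne
      nlinarith [mul_lt_mul_of_pos_left hexp (lt_of_lt_of_le one_pos hk1)]
  have hDpos : ∀ ω, X ω ≠ 0 → 0 < D ω := by
    intro ω h0
    rw [hD, hg1, hg2, hg3]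
    simp only
    have hpos : 0 < X ω := Nat.pos_of_ne_zero h0
    have hk1 : (1:ℝ) ≤ (X ω : ℝ) := by exact_mod_cast hpos
    have hne : -(c * (X ω : ℝ) * β) ≠ 0 := by
      have : (0:ℝ) < c * (X ω : ℝ) * β := by positivity
      linarith
    have hexp := Real.add_one_lt_exp hne
    nlinarith [mul_lt_mul_of_pos_left hexp (lt_of_lt_of_le one_pos hk1)]
  -- positive measure support
  have hμ0 : μ {ω | X ω = 0} = 0 := by
    have := geom_map_zero μ q hq0 hq1 X hXm hX
    rwa [Measure.map_apply hXm (measurableSet_singleton 0)] at this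
  have hsupp : 0 < μ (Function.support D) := by
    have hsub : {ω | X ω = 0}ᶜ ⊆ Function.support D := by
      intro ω hω
      exact ne_of_gt (hDpos ω hω)
    have hms : MeasurableSet {ω | X ω = 0} := hXm (measurableSet_singleton 0)
    have hcompl : μ ({ω | X ω = 0}ᶜ) = 1 := by
      rw [measure_compl hms (measure_ne_top _ _), hμ0, measure_univ]
      simp
    calc (0 : ENNReal) < 1 := by norm_num
      _ = μ ({ω | X ω = 0}ᶜ) := hcompl.symm
      _ ≤ μ (Function.support D) := measure_mono hsub
  have hIntDpos : 0 < ∫ ω, D ω ∂μ :=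
    (integral_pos_iff_support_of_nonneg hDnonneg hDInt).mpr hsupp
  have hIntD : ∫ ω, D ω ∂μ
      = ∫ ω, g3 (X ω) ∂μ - ∫ ω, g1 (X ω) ∂μ + (c * β) * ∫ ω, g2 (X ω) ∂μ := by
    rw [hD]
    rw [integral_add hsub hmul, integral_sub hInt3 hInt1, integral_const_mul]
  -- the fixed point equation
  have hF : ∫ ω, g3 (X ω) ∂μ = (1 - β) * (1 / (1 - q)) := by
    have heq' : β = 1 - (∫ ω, g3 (X ω) ∂μ) / (1 / (1 - q)) := by
      rw [← hE1]
      exact heq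
    have h10 : (1:ℝ) / (1 - q) ≠ 0 := one_div_ne_zero h1q'
    field_simp at heq'
    field_simp
    linarith
  rw [hIntD, hF, hE1, hE2] at hIntDpos
  -- derive contradiction
  have hcc : c * (1 + q) ≤ 1 - q := (le_div_iff₀ h1pq).mp hc
  have hkey : 0 < -β * (1 - q) + c * β * (1 + q) := by
    have h2 := mul_pos hIntDpos (mul_pos h1q (pow_pos h1q 2))
    have hexp : ((1 - β) * (1 / (1 - q)) - 1 / (1 - q) + c * β * ((1 + q) / (1 - q) ^ 2))
        * ((1 - q) * (1 - q) ^ 2) = (-β * (1 - q) + c * β * (1 + q)) * (1 - q) := by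
      field_simp
      ring
    rw [hexp] at h2
    nlinarith [h2]
  nlinarith [mul_pos hβpos h1q, hkey, mul_le_mul_of_nonneg_left hcc hβ0]
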